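/- arXiv:1408.0553 — 3 statements merged into one kernel-verified Lean document; each statement's English description precedes it below -/
import Mathlib

section
/- Let h ∈ ℝ^k be a random vector whose moments satisfy: E[h_i² h_j²] ≤ τ for all i ≠ j, and E[h_i³ h_j] = 0 for i ≠ j, and E[h_i h_j h_l h_m] = 0 whenever the multi-index (i,j,l,m) has a coordinate appearing exactly once. Let A = [a₁,…,a_k] ∈ ℝ^{d×k}, x = Ah, and define the residual tensor Ψ = E[x^{⊗4}] − Σ_{i∈[k]} E[h_i⁴] a_i^{⊗4}. Then the tensor spectral norm satisfies ‖Ψ‖ ≤ 3 τ ‖A‖⁴. -/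
open MeasureTheory Finset

private lemma sum_comm4 {ι : Type*} [Fintype ι] (T : ι → ι → ι → ι → ℝ) :
    ∑ e, ∑ c, ∑ b, ∑ a, T a b c e = ∑ a, ∑ b, ∑ c, ∑ e, T a b c e := by
  rw [Finset.sum_comm]
  conv_lhs => enter [2, c]; rw [Finset.sum_comm]
  rw [Finset.sum_comm]
  conv_lhs => enter [2, b, 2, c]; rw [Finset.sum_comm]
  conv_lhs => enter [2, b]; rw [Finset.sum_comm]
  rw [Finset.sum_comm]

private lemma sum_comm5 {ι κ : Type*} [Fintype ι] [Fintype κ]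
    (T : ι → κ → κ → κ → κ → ℝ) :
    ∑ a, ∑ b, ∑ c, ∑ e, ∑ x, T x a b c e = ∑ x, ∑ a, ∑ b, ∑ c, ∑ e, T x a b c e := by
  conv_lhs => enter [2, a, 2, b, 2, c]; rw [Finset.sum_comm]
  conv_lhs => enter [2, a, 2, b]; rw [Finset.sum_comm]
  conv_lhs => enter [2, a]; rw [Finset.sum_comm]
  rw [Finset.sum_comm]

private lemma prod4_sum {m : ℕ} (f g r s : Fin m → ℝ) :
    (∑ a, f a) * (∑ b, g b) * (∑ c, r c) * (∑ e, s e)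
      = ∑ a, ∑ b, ∑ c, ∑ e, f a * g b * r c * s e := by
  simp only [Finset.sum_mul, Finset.mul_sum]
  rw [← sum_comm4 (fun a b c e => f a * g b * r c * s e)]

private lemma integral_sum4 {Ω : Type*} [MeasurableSpace Ω] (μ : Measure Ω) {m : ℕ}
    (f : Fin m → Fin m → Fin m → Fin m → Ω → ℝ)
    (hf : ∀ a b c e, Integrable (f a b c e) μ) :
    ∫ ω, ∑ a, ∑ b, ∑ c, ∑ e, f a b c e ω ∂μ
      = ∑ a, ∑ b, ∑ c, ∑ e, ∫ ω, f a b c e ω ∂μ := by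
  rw [integral_finset_sum _ (fun a _ => integrable_finset_sum _ fun b _ =>
    integrable_finset_sum _ fun c _ => integrable_finset_sum _ fun e _ => hf a b c e)]
  refine Finset.sum_congr rfl fun a _ => ?_
  rw [integral_finset_sum _ (fun b _ => integrable_finset_sum _ fun c _ =>
    integrable_finset_sum _ fun e _ => hf a b c e)]
  refine Finset.sum_congr rfl fun b _ => ?_
  rw [integral_finset_sum _ (fun c _ => integrable_finset_sum _ fun e _ => hf a b c e)]
  refine Finset.sum_congr rfl fun c _ => ?_
  rw [integral_finset_sum _ (fun e _ => hf a b c e)]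

private lemma integral_prod4 {Ω : Type*} [MeasurableSpace Ω] (μ : Measure Ω) {m : ℕ}
    (f : Fin m → Ω → ℝ) (c₁ c₂ c₃ c₄ : Fin m → ℝ)
    (hf : ∀ a b c e, Integrable (fun ω => f a ω * f b ω * f c ω * f e ω) μ) :
    ∫ ω, (∑ a, f a ω * c₁ a) * (∑ b, f b ω * c₂ b) * (∑ c, f c ω * c₃ c)
        * (∑ e, f e ω * c₄ e) ∂μ
      = ∑ a, ∑ b, ∑ c, ∑ e,
          (∫ ω, f a ω * f b ω * f c ω * f e ω ∂μ) * (c₁ a * c₂ b * c₃ c * c₄ e) := by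
  have h1 : ∀ ω, (∑ a, f a ω * c₁ a) * (∑ b, f b ω * c₂ b) * (∑ c, f c ω * c₃ c)
        * (∑ e, f e ω * c₄ e)
      = ∑ a, ∑ b, ∑ c, ∑ e,
          (fun ω => (f a ω * f b ω * f c ω * f e ω) * (c₁ a * c₂ b * c₃ c * c₄ e)) ω := by
    intro ω
    rw [prod4_sum]
    exact Finset.sum_congr rfl fun a _ => Finset.sum_congr rfl fun b _ =>
      Finset.sum_congr rfl fun c _ => Finset.sum_congr rfl fun e _ => by ring
  simp only [h1]
  rw [integral_sum4 μ _ (fun a b c e => (hf a b c e).mul_const _)]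
  exact Finset.sum_congr rfl fun a _ => Finset.sum_congr rfl fun b _ =>
    Finset.sum_congr rfl fun c _ => Finset.sum_congr rfl fun e _ =>
      integral_mul_const _ _

private lemma filter_card_one {k : ℕ} (v : Fin 4 → Fin k) (t : Fin 4)
    (huniq : ∀ s, v s = v t ↔ s = t) :
    (Finset.univ.filter fun s : Fin 4 => v s = v t).card = 1 := by
  have : (Finset.univ.filter fun s : Fin 4 => v s = v t) = {t} := by
    ext s; simp [huniq s]
  rw [this, Finset.card_singleton]

private lemma keyx {k : ℕ} (F : Fin k → Fin k → Fin k → Fin k → ℝ) (pu pv pw pz : Fin k → ℝ)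
    (Fz0 : ∀ a b c e, b ≠ a → c ≠ a → e ≠ a → F a b c e = 0)
    (Fz1 : ∀ a b c e, a ≠ b → c ≠ b → e ≠ b → F a b c e = 0)
    (Fz2 : ∀ a b c e, a ≠ c → b ≠ c → e ≠ c → F a b c e = 0)
    (Fz3 : ∀ a b c e, a ≠ e → b ≠ e → c ≠ e → F a b c e = 0)
    (G : Fin k → Fin k → Fin k → Fin k → ℝ)
    (hG : ∀ a b c e, G a b c e = F a b c e * (pu a * pv b * pw c * pz e)) (x : Fin k) :
    ∑ b, ∑ c, ∑ e, G x b c e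
      = G x x x x + ∑ y ∈ Finset.univ.erase x, (G x x y y + G x y x y + G x y y x) := by
  have hGz : ∀ a b c e, F a b c e = 0 → G a b c e = 0 := by
    intro a b c e hf; rw [hG, hf, zero_mul]
  have hxxc : ∀ c, c ≠ x → ∑ e, G x x c e = G x x c c := by
    intro c hc
    refine Finset.sum_eq_single c (fun e _ hec => hGz _ _ _ _ (Fz2 x x c e hc.symm hc.symm hec)) (by simp)
  have hxxx : ∑ e, G x x x e = G x x x x := by
    refine Finset.sum_eq_single x (fun e _ hec => hGz _ _ _ _ (Fz3 x x x e hec.symm hec.symm hec.symm)) (by simp)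
  have hxbx : ∀ b, b ≠ x → ∑ e, G x b x e = G x b x b := by
    intro b hb
    refine Finset.sum_eq_single b (fun e _ heb => hGz _ _ _ _ (Fz1 x b x e hb.symm hb.symm heb)) (by simp)
  have hxbb : ∀ b, b ≠ x → ∑ e, G x b b e = G x b b x := by
    intro b hb
    refine Finset.sum_eq_single x (fun e _ hex => hGz _ _ _ _ (Fz0 x b b e hb hb hex)) (by simp)
  have hxbc : ∀ b c, b ≠ x → c ≠ x → c ≠ b → ∑ e, G x b c e = 0 := by
    intro b c hb hc hcb
    refine Finset.sum_eq_zero fun e _ => ?_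
    by_cases hec : e = c
    · rw [hec]; exact hGz _ _ _ _ (Fz0 x b c c hb hc hc)
    · exact hGz _ _ _ _ (Fz2 x b c e hc.symm hcb.symm hec)
  have part1 : ∑ c, ∑ e, G x x c e = G x x x x + ∑ y ∈ Finset.univ.erase x, G x x y y := by
    rw [← Finset.add_sum_erase _ _ (Finset.mem_univ x), hxxx]
    congr 1
    exact Finset.sum_congr rfl fun c hc => hxxc c (Finset.ne_of_mem_erase hc)
  have part2 : ∀ b, b ≠ x → ∑ c, ∑ e, G x b c e = G x b x b + G x b b x := by
    intro b hb
    rw [← Finset.add_sum_erase _ _ (Finset.mem_univ x), hxbx b hb]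
    congr 1
    have hbmem : b ∈ Finset.univ.erase x := Finset.mem_erase.2 ⟨hb, Finset.mem_univ b⟩
    rw [← Finset.add_sum_erase _ _ hbmem, hxbb b hb]
    have : ∑ c ∈ (Finset.univ.erase x).erase b, ∑ e, G x b c e = 0 := by
      refine Finset.sum_eq_zero fun c hc => ?_
      have hcb : c ≠ b := Finset.ne_of_mem_erase hc
      have hcx : c ≠ x := Finset.ne_of_mem_erase (Finset.mem_of_mem_erase hc)
      exact hxbc b c hb hcx hcb
    rw [this, add_zero]
  calc ∑ b, ∑ c, ∑ e, G x b c e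
      = (∑ c, ∑ e, G x x c e) + ∑ b ∈ Finset.univ.erase x, ∑ c, ∑ e, G x b c e := by
        exact (Finset.add_sum_erase _ (fun b => ∑ c, ∑ e, G x b c e) (Finset.mem_univ x)).symm
    _ = (G x x x x + ∑ y ∈ Finset.univ.erase x, G x x y y)
        + ∑ b ∈ Finset.univ.erase x, (G x b x b + G x b b x) := by
        rw [part1]
        congr 1
        exact Finset.sum_congr rfl fun b hb => part2 b (Finset.ne_of_mem_erase hb)
    _ = G x x x x + ∑ y ∈ Finset.univ.erase x, (G x x y y + G x y x y + G x y y x) := by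
        rw [add_assoc, ← Finset.sum_add_distrib]
        congr 1
        exact Finset.sum_congr rfl fun y _ => by ring

private lemma uniq0 {k : ℕ} (a b c e : Fin k) (h1 : b ≠ a) (h2 : c ≠ a) (h3 : e ≠ a) :
    ∀ s, (![a, b, c, e] : Fin 4 → Fin k) s = ![a, b, c, e] 0 ↔ s = 0 := by
  intro s; fin_cases s <;> simp_all

private lemma uniq1 {k : ℕ} (a b c e : Fin k) (h1 : a ≠ b) (h2 : c ≠ b) (h3 : e ≠ b) :
    ∀ s, (![a, b, c, e] : Fin 4 → Fin k) s = ![a, b, c, e] 1 ↔ s = 1 := by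
  intro s; fin_cases s <;> simp_all

private lemma uniq2 {k : ℕ} (a b c e : Fin k) (h1 : a ≠ c) (h2 : b ≠ c) (h3 : e ≠ c) :
    ∀ s, (![a, b, c, e] : Fin 4 → Fin k) s = ![a, b, c, e] 2 ↔ s = 2 := by
  intro s; fin_cases s <;> simp_all

private lemma uniq3 {k : ℕ} (a b c e : Fin k) (h1 : a ≠ e) (h2 : b ≠ e) (h3 : c ≠ e) :
    ∀ s, (![a, b, c, e] : Fin 4 → Fin k) s = ![a, b, c, e] 3 ↔ s = 3 := by
  intro s; fin_cases s <;> simp_all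

private lemma sum_sum_mul {k : ℕ} (t : ℝ) (f g : Fin k → ℝ) :
    ∑ x, ∑ y, t * (f x * g y) = t * ((∑ x, f x) * (∑ y, g y)) := by
  rw [Finset.sum_mul_sum, Finset.mul_sum]
  refine Finset.sum_congr rfl fun x _ => ?_
  rw [Finset.mul_sum]

/-- Spectral norm of a (possibly rectangular) real matrix, as the operator norm of the
associated linear map between Euclidean spaces. -/
noncomputable def specNorm (d k : ℕ) (A : Matrix (Fin d) (Fin k) ℝ) : ℝ :=
  ‖LinearMap.toContinuousLinearMap (Matrix.toEuclideanLin A)‖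

private lemma sqnorm_le {d k : ℕ} (A : Matrix (Fin d) (Fin k) ℝ)
    (uu : EuclideanSpace ℝ (Fin d)) (huu : ‖uu‖ = 1) :
    Real.sqrt (∑ a, (∑ i, A i a * uu i) ^ 2) ≤ specNorm d k A := by
  have hN0 : (0:ℝ) ≤ specNorm d k A := norm_nonneg _
  set pp : Fin k → ℝ := fun a => ∑ i, A i a * uu i with hpp
  set P : EuclideanSpace ℝ (Fin k) := (WithLp.equiv 2 (Fin k → ℝ)).symm pp with hP
  have hPa : ∀ a, P a = pp a := fun a => rfl
  have hPnorm : ‖P‖ = Real.sqrt (∑ a, pp a ^ 2) := by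
    rw [EuclideanSpace.norm_eq]
    congr 1
    exact Finset.sum_congr rfl fun a _ => by rw [hPa, Real.norm_eq_abs, sq_abs]
  have hML : ∀ i, (Matrix.toEuclideanLin A P) i = ∑ a, A i a * pp a := by
    intro i; rfl
  have hsum : ∑ a, pp a ^ 2 = (inner ℝ uu (Matrix.toEuclideanLin A P) : ℝ) := by
    rw [PiLp.inner_apply]
    simp only [RCLike.inner_apply, conj_trivial, hML]
    refine Eq.trans ?_ (Finset.sum_congr rfl fun i _ => mul_comm _ _)
    calc ∑ a, pp a ^ 2 = ∑ a, ∑ i, uu i * (A i a * pp a) := by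
          refine Finset.sum_congr rfl fun a _ => ?_
          rw [pow_two]
          nth_rewrite 1 [hpp]
          rw [Finset.sum_mul]
          exact Finset.sum_congr rfl fun i _ => by ring
      _ = ∑ i, ∑ a, uu i * (A i a * pp a) := Finset.sum_comm
      _ = ∑ i, uu i * ∑ a, A i a * pp a := by
          exact Finset.sum_congr rfl fun i _ => (Finset.mul_sum _ _ _).symm
  have hApp : ‖Matrix.toEuclideanLin A P‖ ≤ specNorm d k A * ‖P‖ := by
    have h := (LinearMap.toContinuousLinearMap (Matrix.toEuclideanLin A)).le_opNorm P
    simpa [specNorm] using h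
  have hin : (inner ℝ uu (Matrix.toEuclideanLin A P) : ℝ)
      ≤ ‖uu‖ * ‖Matrix.toEuclideanLin A P‖ := real_inner_le_norm _ _
  have hsq : ‖P‖ ^ 2 = ∑ a, pp a ^ 2 := by
    rw [hPnorm, Real.sq_sqrt (Finset.sum_nonneg fun a _ => sq_nonneg _)]
  have hle : ‖P‖ ^ 2 ≤ specNorm d k A * ‖P‖ := by
    rw [hsq, hsum]
    calc (inner ℝ uu (Matrix.toEuclideanLin A P) : ℝ)
        ≤ ‖uu‖ * ‖Matrix.toEuclideanLin A P‖ := hin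
      _ = ‖Matrix.toEuclideanLin A P‖ := by rw [huu, one_mul]
      _ ≤ specNorm d k A * ‖P‖ := hApp
  have hfin : ‖P‖ ≤ specNorm d k A := by nlinarith [norm_nonneg P]
  calc Real.sqrt (∑ a, pp a ^ 2) = ‖P‖ := hPnorm.symm
    _ ≤ specNorm d k A := hfin

private lemma cs_bound {d k : ℕ} (A : Matrix (Fin d) (Fin k) ℝ)
    (uu vv : EuclideanSpace ℝ (Fin d)) (huu : ‖uu‖ = 1) (hvv : ‖vv‖ = 1) :
    ∑ a, |(∑ i, A i a * uu i) * (∑ i, A i a * vv i)| ≤ specNorm d k A ^ 2 := by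
  have hN0 : (0:ℝ) ≤ specNorm d k A := norm_nonneg _
  calc ∑ a, |(∑ i, A i a * uu i) * (∑ i, A i a * vv i)|
      = ∑ a, |∑ i, A i a * uu i| * |∑ i, A i a * vv i| := by
        exact Finset.sum_congr rfl fun a _ => abs_mul _ _
    _ ≤ Real.sqrt (∑ a, |∑ i, A i a * uu i| ^ 2) * Real.sqrt (∑ a, |∑ i, A i a * vv i| ^ 2) :=
        Real.sum_mul_le_sqrt_mul_sqrt _ _ _
    _ = Real.sqrt (∑ a, (∑ i, A i a * uu i) ^ 2) * Real.sqrt (∑ a, (∑ i, A i a * vv i) ^ 2) := by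
        simp only [sq_abs]
    _ ≤ specNorm d k A * specNorm d k A := by
        exact mul_le_mul (sqnorm_le A uu huu) (sqnorm_le A vv hvv) (Real.sqrt_nonneg _) hN0
    _ = specNorm d k A ^ 2 := (sq _).symm

theorem stmt_6 {Ω : Type*} [MeasurableSpace Ω] (μ : Measure Ω) [IsProbabilityMeasure μ]
    (d k : ℕ) (τ : ℝ) (hτ : 0 ≤ τ) (h : Ω → Fin k → ℝ)
    (A : Matrix (Fin d) (Fin k) ℝ)
    (hint : ∀ i j l m : Fin k, Integrable (fun ω => h ω i * h ω j * h ω l * h ω m) μ)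
    (hcross : ∀ i j : Fin k, i ≠ j → ∫ ω, (h ω i) ^ 2 * (h ω j) ^ 2 ∂μ ≤ τ)
    (hodd : ∀ i j : Fin k, i ≠ j → ∫ ω, (h ω i) ^ 3 * h ω j ∂μ = 0)
    (hsingle : ∀ i j l m : Fin k,
      (∃ t : Fin 4, (Finset.univ.filter fun s : Fin 4 =>
          (![i, j, l, m] : Fin 4 → Fin k) s = ![i, j, l, m] t).card = 1) →
      ∫ ω, h ω i * h ω j * h ω l * h ω m ∂μ = 0)
    (u v w z : EuclideanSpace ℝ (Fin d))
    (hu : ‖u‖ = 1) (hv : ‖v‖ = 1) (hw : ‖w‖ = 1) (hz : ‖z‖ = 1) :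
    |∑ i₁, ∑ i₂, ∑ i₃, ∑ i₄,
        ((∫ ω, A.mulVec (h ω) i₁ * A.mulVec (h ω) i₂ * A.mulVec (h ω) i₃ *
            A.mulVec (h ω) i₄ ∂μ)
          - ∑ i, (∫ ω, (h ω i) ^ 4 ∂μ) * A i₁ i * A i₂ i * A i₃ i * A i₄ i)
        * u i₁ * v i₂ * w i₃ * z i₄|
      ≤ 3 * τ * (specNorm d k A) ^ 4 := by
  classical
  have hN0 : (0:ℝ) ≤ specNorm d k A := norm_nonneg _
  obtain ⟨pu, hpu⟩ : ∃ pp : Fin k → ℝ, pp = fun a => ∑ i, A i a * u i := ⟨_, rfl⟩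
  obtain ⟨pv, hpv⟩ : ∃ pp : Fin k → ℝ, pp = fun a => ∑ i, A i a * v i := ⟨_, rfl⟩
  obtain ⟨pw, hpw⟩ : ∃ pp : Fin k → ℝ, pp = fun a => ∑ i, A i a * w i := ⟨_, rfl⟩
  obtain ⟨pz, hpz⟩ : ∃ pp : Fin k → ℝ, pp = fun a => ∑ i, A i a * z i := ⟨_, rfl⟩
  obtain ⟨F, hF⟩ : ∃ FF : Fin k → Fin k → Fin k → Fin k → ℝ,
      FF = fun a b c e => ∫ ω, h ω a * h ω b * h ω c * h ω e ∂μ := ⟨_, rfl⟩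
  obtain ⟨G, hG⟩ : ∃ GG : Fin k → Fin k → Fin k → Fin k → ℝ,
      GG = fun a b c e => F a b c e * (pu a * pv b * pw c * pz e) := ⟨_, rfl⟩
  have hFa : ∀ a b c e, F a b c e = ∫ ω, h ω a * h ω b * h ω c * h ω e ∂μ := by
    intro a b c e; rw [hF]
  have hGa : ∀ a b c e, G a b c e = F a b c e * (pu a * pv b * pw c * pz e) := by
    intro a b c e; rw [hG]
  -- zero lemmas for F
  have F0 : ∀ (a b c e : Fin k) (t : Fin 4),
      (∀ s, (![a, b, c, e] : Fin 4 → Fin k) s = ![a, b, c, e] t ↔ s = t) →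
      F a b c e = 0 := by
    intro a b c e t ht
    rw [hFa]
    exact hsingle a b c e ⟨t, filter_card_one _ t ht⟩
  have Fz0 : ∀ a b c e, b ≠ a → c ≠ a → e ≠ a → F a b c e = 0 := by
    intro a b c e h1 h2 h3
    exact F0 a b c e 0 (uniq0 a b c e h1 h2 h3)
  have Fz1 : ∀ a b c e, a ≠ b → c ≠ b → e ≠ b → F a b c e = 0 := by
    intro a b c e h1 h2 h3
    exact F0 a b c e 1 (uniq1 a b c e h1 h2 h3)
  have Fz2 : ∀ a b c e, a ≠ c → b ≠ c → e ≠ c → F a b c e = 0 := by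
    intro a b c e h1 h2 h3
    exact F0 a b c e 2 (uniq2 a b c e h1 h2 h3)
  have Fz3 : ∀ a b c e, a ≠ e → b ≠ e → c ≠ e → F a b c e = 0 := by
    intro a b c e h1 h2 h3
    exact F0 a b c e 3 (uniq3 a b c e h1 h2 h3)
  -- integrability of products of components of A h
  have hintM : ∀ i₁ i₂ i₃ i₄ : Fin d, Integrable (fun ω =>
      A.mulVec (h ω) i₁ * A.mulVec (h ω) i₂ * A.mulVec (h ω) i₃ * A.mulVec (h ω) i₄) μ := by
    intro i₁ i₂ i₃ i₄
    have heq : (fun ω => A.mulVec (h ω) i₁ * A.mulVec (h ω) i₂ * A.mulVec (h ω) i₃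
          * A.mulVec (h ω) i₄)
        = fun ω => ∑ a, ∑ b, ∑ c, ∑ e,
            (A i₁ a * A i₂ b * A i₃ c * A i₄ e) * (h ω a * h ω b * h ω c * h ω e) := by
      funext ω
      simp only [Matrix.mulVec, dotProduct]
      rw [prod4_sum]
      exact Finset.sum_congr rfl fun a _ => Finset.sum_congr rfl fun b _ =>
        Finset.sum_congr rfl fun c _ => Finset.sum_congr rfl fun e _ => by ring
    rw [heq]
    exact integrable_finset_sum _ fun a _ => integrable_finset_sum _ fun b _ =>
      integrable_finset_sum _ fun c _ => integrable_finset_sum _ fun e _ =>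
        (hint a b c e).const_mul _
  -- bridge between A h components and transposed products
  have bridge : ∀ (uu : Fin d → ℝ) (pp : Fin k → ℝ), (∀ a, pp a = ∑ i, A i a * uu i) →
      ∀ ω : Ω, (∑ i, A.mulVec (h ω) i * uu i) = ∑ a, h ω a * pp a := by
    intro uu pp hppdef ω
    simp only [Matrix.mulVec, dotProduct]
    calc ∑ i, (∑ a, A i a * h ω a) * uu i
        = ∑ i, ∑ a, h ω a * (A i a * uu i) := by
          refine Finset.sum_congr rfl fun i _ => ?_
          rw [Finset.sum_mul]
          exact Finset.sum_congr rfl fun a _ => by ring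
      _ = ∑ a, ∑ i, h ω a * (A i a * uu i) := Finset.sum_comm
      _ = ∑ a, h ω a * pp a := by
          refine Finset.sum_congr rfl fun a _ => ?_
          rw [← Finset.mul_sum, ← hppdef a]
  -- Step 1: the main quartic term
  have hS1 : (∑ i₁, ∑ i₂, ∑ i₃, ∑ i₄,
      (∫ ω, A.mulVec (h ω) i₁ * A.mulVec (h ω) i₂ * A.mulVec (h ω) i₃ *
          A.mulVec (h ω) i₄ ∂μ) * u i₁ * v i₂ * w i₃ * z i₄)
      = ∑ a, ∑ b, ∑ c, ∑ e, G a b c e := by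
    have hgInt : ∀ i₁ i₂ i₃ i₄ : Fin d, Integrable (fun ω =>
        (A.mulVec (h ω) i₁ * u i₁) * (A.mulVec (h ω) i₂ * v i₂) * (A.mulVec (h ω) i₃ * w i₃)
          * (A.mulVec (h ω) i₄ * z i₄)) μ := by
      intro i₁ i₂ i₃ i₄
      have heq : (fun ω => (A.mulVec (h ω) i₁ * u i₁) * (A.mulVec (h ω) i₂ * v i₂)
            * (A.mulVec (h ω) i₃ * w i₃) * (A.mulVec (h ω) i₄ * z i₄))
          = fun ω => (u i₁ * v i₂ * w i₃ * z i₄) *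
              (A.mulVec (h ω) i₁ * A.mulVec (h ω) i₂ * A.mulVec (h ω) i₃
                * A.mulVec (h ω) i₄) := by
        funext ω; ring
      rw [heq]
      exact (hintM i₁ i₂ i₃ i₄).const_mul _
    calc (∑ i₁, ∑ i₂, ∑ i₃, ∑ i₄,
        (∫ ω, A.mulVec (h ω) i₁ * A.mulVec (h ω) i₂ * A.mulVec (h ω) i₃ *
            A.mulVec (h ω) i₄ ∂μ) * u i₁ * v i₂ * w i₃ * z i₄)
        = ∑ i₁, ∑ i₂, ∑ i₃, ∑ i₄, ∫ ω, (fun ω =>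
            (A.mulVec (h ω) i₁ * u i₁) * (A.mulVec (h ω) i₂ * v i₂)
              * (A.mulVec (h ω) i₃ * w i₃) * (A.mulVec (h ω) i₄ * z i₄)) ω ∂μ := by
          refine Finset.sum_congr rfl fun i₁ _ => Finset.sum_congr rfl fun i₂ _ =>
            Finset.sum_congr rfl fun i₃ _ => Finset.sum_congr rfl fun i₄ _ => ?_
          rw [show (fun ω => (A.mulVec (h ω) i₁ * u i₁) * (A.mulVec (h ω) i₂ * v i₂)
                * (A.mulVec (h ω) i₃ * w i₃) * (A.mulVec (h ω) i₄ * z i₄))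
              = fun ω => (A.mulVec (h ω) i₁ * A.mulVec (h ω) i₂ * A.mulVec (h ω) i₃
                * A.mulVec (h ω) i₄) * (u i₁ * v i₂ * w i₃ * z i₄) from
            funext fun ω => by ring]
          rw [integral_mul_const]
          ring
      _ = ∫ ω, ∑ i₁, ∑ i₂, ∑ i₃, ∑ i₄, (fun ω =>
            (A.mulVec (h ω) i₁ * u i₁) * (A.mulVec (h ω) i₂ * v i₂)
              * (A.mulVec (h ω) i₃ * w i₃) * (A.mulVec (h ω) i₄ * z i₄)) ω ∂μ :=
          (integral_sum4 μ _ hgInt).symm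
      _ = ∫ ω, (∑ a, h ω a * pu a) * (∑ b, h ω b * pv b) * (∑ c, h ω c * pw c)
            * (∑ e, h ω e * pz e) ∂μ := by
          refine integral_congr_ae (Filter.Eventually.of_forall fun ω => ?_)
          show _ = (∑ a, h ω a * pu a) * (∑ b, h ω b * pv b) * (∑ c, h ω c * pw c)
            * (∑ e, h ω e * pz e)
          rw [← bridge u pu (fun a => by rw [hpu]) ω, ← bridge v pv (fun a => by rw [hpv]) ω,
            ← bridge w pw (fun a => by rw [hpw]) ω, ← bridge z pz (fun a => by rw [hpz]) ω]
          exact (prod4_sum (fun i₁ => A.mulVec (h ω) i₁ * u i₁)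
            (fun i₂ => A.mulVec (h ω) i₂ * v i₂) (fun i₃ => A.mulVec (h ω) i₃ * w i₃)
            (fun i₄ => A.mulVec (h ω) i₄ * z i₄)).symm
      _ = ∑ a, ∑ b, ∑ c, ∑ e,
            (∫ ω, h ω a * h ω b * h ω c * h ω e ∂μ) * (pu a * pv b * pw c * pz e) :=
          integral_prod4 μ (fun a ω => h ω a) pu pv pw pz hint
      _ = ∑ a, ∑ b, ∑ c, ∑ e, G a b c e := by
          refine Finset.sum_congr rfl fun a _ => Finset.sum_congr rfl fun b _ =>
            Finset.sum_congr rfl fun c _ => Finset.sum_congr rfl fun e _ => ?_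
          rw [hGa, hFa]
  -- diagonal identification
  have hdiagF : ∀ x : Fin k, (∫ ω, (h ω x) ^ 4 ∂μ) = F x x x x := by
    intro x
    rw [hFa, show (fun ω => h ω x * h ω x * h ω x * h ω x) = fun ω => (h ω x) ^ 4 from
      funext fun ω => by ring]
  -- Step 2: the subtracted diagonal term
  have hS2 : (∑ i₁, ∑ i₂, ∑ i₃, ∑ i₄,
      (∑ x, (∫ ω, (h ω x) ^ 4 ∂μ) * A i₁ x * A i₂ x * A i₃ x * A i₄ x)
        * u i₁ * v i₂ * w i₃ * z i₄)
      = ∑ x, G x x x x := by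
    calc (∑ i₁, ∑ i₂, ∑ i₃, ∑ i₄,
        (∑ x, (∫ ω, (h ω x) ^ 4 ∂μ) * A i₁ x * A i₂ x * A i₃ x * A i₄ x)
          * u i₁ * v i₂ * w i₃ * z i₄)
        = ∑ i₁, ∑ i₂, ∑ i₃, ∑ i₄, ∑ x, (∫ ω, (h ω x) ^ 4 ∂μ)
            * A i₁ x * A i₂ x * A i₃ x * A i₄ x * u i₁ * v i₂ * w i₃ * z i₄ := by
          simp only [Finset.sum_mul]
      _ = ∑ x, ∑ i₁, ∑ i₂, ∑ i₃, ∑ i₄, (∫ ω, (h ω x) ^ 4 ∂μ)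
            * A i₁ x * A i₂ x * A i₃ x * A i₄ x * u i₁ * v i₂ * w i₃ * z i₄ :=
          sum_comm5 (fun x i₁ i₂ i₃ i₄ => (∫ ω, (h ω x) ^ 4 ∂μ)
            * A i₁ x * A i₂ x * A i₃ x * A i₄ x * u i₁ * v i₂ * w i₃ * z i₄)
      _ = ∑ x, G x x x x := by
          refine Finset.sum_congr rfl fun x _ => ?_
          rw [hGa, ← hdiagF x, hpu, hpv, hpw, hpz]
          rw [prod4_sum (fun i₁ => A i₁ x * u i₁) (fun i₂ => A i₂ x * v i₂)
            (fun i₃ => A i₃ x * w i₃) (fun i₄ => A i₄ x * z i₄)]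
          simp only [Finset.mul_sum]
          refine Finset.sum_congr rfl fun i₁ _ => Finset.sum_congr rfl fun i₂ _ =>
            Finset.sum_congr rfl fun i₃ _ => Finset.sum_congr rfl fun i₄ _ => by ring
  -- main identity
  have hmain : (∑ i₁, ∑ i₂, ∑ i₃, ∑ i₄,
      ((∫ ω, A.mulVec (h ω) i₁ * A.mulVec (h ω) i₂ * A.mulVec (h ω) i₃ *
          A.mulVec (h ω) i₄ ∂μ)
        - ∑ i, (∫ ω, (h ω i) ^ 4 ∂μ) * A i₁ i * A i₂ i * A i₃ i * A i₄ i)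
      * u i₁ * v i₂ * w i₃ * z i₄)
      = ∑ x, ∑ y ∈ Finset.univ.erase x, (G x x y y + G x y x y + G x y y x) := by
    calc (∑ i₁, ∑ i₂, ∑ i₃, ∑ i₄,
        ((∫ ω, A.mulVec (h ω) i₁ * A.mulVec (h ω) i₂ * A.mulVec (h ω) i₃ *
            A.mulVec (h ω) i₄ ∂μ)
          - ∑ i, (∫ ω, (h ω i) ^ 4 ∂μ) * A i₁ i * A i₂ i * A i₃ i * A i₄ i)
        * u i₁ * v i₂ * w i₃ * z i₄)
        = (∑ i₁, ∑ i₂, ∑ i₃, ∑ i₄,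
            (∫ ω, A.mulVec (h ω) i₁ * A.mulVec (h ω) i₂ * A.mulVec (h ω) i₃ *
                A.mulVec (h ω) i₄ ∂μ) * u i₁ * v i₂ * w i₃ * z i₄)
          - (∑ i₁, ∑ i₂, ∑ i₃, ∑ i₄,
            (∑ x, (∫ ω, (h ω x) ^ 4 ∂μ) * A i₁ x * A i₂ x * A i₃ x * A i₄ x)
              * u i₁ * v i₂ * w i₃ * z i₄) := by
          simp only [sub_mul, Finset.sum_sub_distrib]
      _ = (∑ x, ∑ b, ∑ c, ∑ e, G x b c e) - ∑ x, G x x x x := by rw [hS1, hS2]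
      _ = ∑ x, ((∑ b, ∑ c, ∑ e, G x b c e) - G x x x x) := by rw [Finset.sum_sub_distrib]
      _ = ∑ x, ∑ y ∈ Finset.univ.erase x, (G x x y y + G x y x y + G x y y x) := by
          refine Finset.sum_congr rfl fun x _ => ?_
          rw [keyx F pu pv pw pz Fz0 Fz1 Fz2 Fz3 G hGa x]
          ring
  -- bounds on the cross moments
  have hFxxyy : ∀ x y : Fin k, F x x y y = ∫ ω, (h ω x) ^ 2 * (h ω y) ^ 2 ∂μ := by
    intro x y
    rw [hFa, show (fun ω => h ω x * h ω x * h ω y * h ω y)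
      = fun ω => (h ω x) ^ 2 * (h ω y) ^ 2 from funext fun ω => by ring]
  have hFxyxy : ∀ x y : Fin k, F x y x y = ∫ ω, (h ω x) ^ 2 * (h ω y) ^ 2 ∂μ := by
    intro x y
    rw [hFa, show (fun ω => h ω x * h ω y * h ω x * h ω y)
      = fun ω => (h ω x) ^ 2 * (h ω y) ^ 2 from funext fun ω => by ring]
  have hFxyyx : ∀ x y : Fin k, F x y y x = ∫ ω, (h ω x) ^ 2 * (h ω y) ^ 2 ∂μ := by
    intro x y
    rw [hFa, show (fun ω => h ω x * h ω y * h ω y * h ω x)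
      = fun ω => (h ω x) ^ 2 * (h ω y) ^ 2 from funext fun ω => by ring]
  have hIb : ∀ x y : Fin k, y ≠ x → |∫ ω, (h ω x) ^ 2 * (h ω y) ^ 2 ∂μ| ≤ τ := by
    intro x y hyx
    rw [abs_of_nonneg (integral_nonneg fun ω => by positivity)]
    exact hcross x y hyx.symm
  have hTb : ∀ x y : Fin k, y ≠ x → |G x x y y + G x y x y + G x y y x|
      ≤ τ * (|pu x * pv x| * |pw y * pz y|) + τ * (|pu x * pw x| * |pv y * pz y|)
        + τ * (|pu x * pz x| * |pv y * pw y|) := by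
    intro x y hyx
    have t1 : |G x x y y| ≤ τ * (|pu x * pv x| * |pw y * pz y|) := by
      rw [hGa, abs_mul, hFxxyy]
      rw [show pu x * pv x * pw y * pz y = (pu x * pv x) * (pw y * pz y) from by ring, abs_mul]
      exact mul_le_mul_of_nonneg_right (hIb x y hyx) (mul_nonneg (abs_nonneg _) (abs_nonneg _))
    have t2 : |G x y x y| ≤ τ * (|pu x * pw x| * |pv y * pz y|) := by
      rw [hGa, abs_mul, hFxyxy]
      rw [show pu x * pv y * pw x * pz y = (pu x * pw x) * (pv y * pz y) from by ring, abs_mul]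
      exact mul_le_mul_of_nonneg_right (hIb x y hyx) (mul_nonneg (abs_nonneg _) (abs_nonneg _))
    have t3 : |G x y y x| ≤ τ * (|pu x * pz x| * |pv y * pw y|) := by
      rw [hGa, abs_mul, hFxyyx]
      rw [show pu x * pv y * pw y * pz x = (pu x * pz x) * (pv y * pw y) from by ring, abs_mul]
      exact mul_le_mul_of_nonneg_right (hIb x y hyx) (mul_nonneg (abs_nonneg _) (abs_nonneg _))
    calc |G x x y y + G x y x y + G x y y x|
        ≤ |G x x y y + G x y x y| + |G x y y x| := abs_add_le _ _
      _ ≤ |G x x y y| + |G x y x y| + |G x y y x| := by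
          have := abs_add_le (G x x y y) (G x y x y)
          linarith
      _ ≤ _ := by linarith
  -- Cauchy–Schwarz bounds
  have b1 : ∑ x, |pu x * pv x| ≤ specNorm d k A ^ 2 := by
    simp only [hpu, hpv]; exact cs_bound A u v hu hv
  have b2 : ∑ y, |pw y * pz y| ≤ specNorm d k A ^ 2 := by
    simp only [hpw, hpz]; exact cs_bound A w z hw hz
  have b3 : ∑ x, |pu x * pw x| ≤ specNorm d k A ^ 2 := by
    simp only [hpu, hpw]; exact cs_bound A u w hu hw
  have b4 : ∑ y, |pv y * pz y| ≤ specNorm d k A ^ 2 := by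
    simp only [hpv, hpz]; exact cs_bound A v z hv hz
  have b5 : ∑ x, |pu x * pz x| ≤ specNorm d k A ^ 2 := by
    simp only [hpu, hpz]; exact cs_bound A u z hu hz
  have b6 : ∑ y, |pv y * pw y| ≤ specNorm d k A ^ 2 := by
    simp only [hpv, hpw]; exact cs_bound A v w hv hw
  have hN2 : (0:ℝ) ≤ specNorm d k A ^ 2 := sq_nonneg _
  have s1 : (0:ℝ) ≤ ∑ x, |pu x * pv x| := Finset.sum_nonneg fun x _ => abs_nonneg _
  have s3 : (0:ℝ) ≤ ∑ x, |pu x * pw x| := Finset.sum_nonneg fun x _ => abs_nonneg _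
  have s5 : (0:ℝ) ≤ ∑ x, |pu x * pz x| := Finset.sum_nonneg fun x _ => abs_nonneg _
  have m1 : (∑ x, |pu x * pv x|) * (∑ y, |pw y * pz y|)
      ≤ specNorm d k A ^ 2 * specNorm d k A ^ 2 := mul_le_mul b1 b2 (Finset.sum_nonneg fun y _ => abs_nonneg _) hN2
  have m2 : (∑ x, |pu x * pw x|) * (∑ y, |pv y * pz y|)
      ≤ specNorm d k A ^ 2 * specNorm d k A ^ 2 := mul_le_mul b3 b4 (Finset.sum_nonneg fun y _ => abs_nonneg _) hN2
  have m3 : (∑ x, |pu x * pz x|) * (∑ y, |pv y * pw y|)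
      ≤ specNorm d k A ^ 2 * specNorm d k A ^ 2 := mul_le_mul b5 b6 (Finset.sum_nonneg fun y _ => abs_nonneg _) hN2
  rw [hmain]
  calc |∑ x, ∑ y ∈ Finset.univ.erase x, (G x x y y + G x y x y + G x y y x)|
      ≤ ∑ x, |∑ y ∈ Finset.univ.erase x, (G x x y y + G x y x y + G x y y x)| :=
        Finset.abs_sum_le_sum_abs _ _
    _ ≤ ∑ x, ∑ y ∈ Finset.univ.erase x, |G x x y y + G x y x y + G x y y x| :=
        Finset.sum_le_sum fun x _ => Finset.abs_sum_le_sum_abs _ _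
    _ ≤ ∑ x, ∑ y ∈ Finset.univ.erase x,
          (τ * (|pu x * pv x| * |pw y * pz y|) + τ * (|pu x * pw x| * |pv y * pz y|)
            + τ * (|pu x * pz x| * |pv y * pw y|)) :=
        Finset.sum_le_sum fun x _ => Finset.sum_le_sum fun y hy =>
          hTb x y (Finset.ne_of_mem_erase hy)
    _ ≤ ∑ x, ∑ y,
          (τ * (|pu x * pv x| * |pw y * pz y|) + τ * (|pu x * pw x| * |pv y * pz y|)
            + τ * (|pu x * pz x| * |pv y * pw y|)) :=
        Finset.sum_le_sum fun x _ => Finset.sum_le_sum_of_subset_of_nonneg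
          (Finset.subset_univ _) (fun y _ _ => by positivity)
    _ = τ * ((∑ x, |pu x * pv x|) * (∑ y, |pw y * pz y|))
        + τ * ((∑ x, |pu x * pw x|) * (∑ y, |pv y * pz y|))
        + τ * ((∑ x, |pu x * pz x|) * (∑ y, |pv y * pw y|)) := by
        simp only [Finset.sum_add_distrib]
        rw [sum_sum_mul τ (fun x => |pu x * pv x|) (fun y => |pw y * pz y|),
          sum_sum_mul τ (fun x => |pu x * pw x|) (fun y => |pv y * pz y|),
          sum_sum_mul τ (fun x => |pu x * pz x|) (fun y => |pv y * pw y|)]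
    _ ≤ τ * (specNorm d k A ^ 2 * specNorm d k A ^ 2)
        + τ * (specNorm d k A ^ 2 * specNorm d k A ^ 2)
        + τ * (specNorm d k A ^ 2 * specNorm d k A ^ 2) := by
        exact add_le_add (add_le_add (mul_le_mul_of_nonneg_left m1 hτ)
          (mul_le_mul_of_nonneg_left m2 hτ)) (mul_le_mul_of_nonneg_left m3 hτ)
    _ = 3 * τ * (specNorm d k A) ^ 4 := by ring
end

section
/- Consider the multiview mixture model: h is a discrete random variable on [k] with P[h=j]=w_j, and conditional on h, the three views satisfy x₁ = a_h + z₁, x₂ = b_h + z₂, x₃ = c_h + z₃ where z₁, z₂, z₃ are zero-mean random vectors in ℝ^d, mutually independent and independent of h. Then E[x₁ ⊗ x₂ ⊗ x₃] = Σ_{j∈[k]} w_j · a_j ⊗ b_j ⊗ c_j. -/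
open MeasureTheory ProbabilityTheory

/-- Index family for the four random objects `(h, z₁, z₂, z₃)` of the multiview model. -/
def fam7 (d k : ℕ) : Option (Fin 3) → Type
  | none => Fin k
  | some _ => Fin d → ℝ

instance fam7MeasurableSpace (d k : ℕ) : ∀ o, MeasurableSpace (fam7 d k o)
  | none => inferInstanceAs (MeasurableSpace (Fin k))
  | some _ => inferInstanceAs (MeasurableSpace (Fin d → ℝ))

/-- The four random objects `(h, z₁, z₂, z₃)` bundled as a dependent family. -/
def quad7 {Ω : Type*} {d k : ℕ} (h : Ω → Fin k) (z₁ z₂ z₃ : Ω → Fin d → ℝ) :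
    ∀ o : Option (Fin 3), Ω → fam7 d k o
  | none => h
  | some j => ![z₁, z₂, z₃] j

theorem stmt_7 {Ω : Type*} [MeasurableSpace Ω] (μ : Measure Ω) [IsProbabilityMeasure μ]
    (d k : ℕ) (a b c : Fin k → Fin d → ℝ) (w : Fin k → ℝ)
    (h : Ω → Fin k) (z₁ z₂ z₃ : Ω → Fin d → ℝ)
    (hmh : Measurable h)
    (hm1 : Measurable z₁) (hm2 : Measurable z₂) (hm3 : Measurable z₃)
    (hi1 : ∀ i, Integrable (fun ω => z₁ ω i) μ)
    (hi2 : ∀ i, Integrable (fun ω => z₂ ω i) μ)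
    (hi3 : ∀ i, Integrable (fun ω => z₃ ω i) μ)
    (hw : ∀ j, (μ {ω | h ω = j}).toReal = w j)
    (h01 : ∀ i, ∫ ω, z₁ ω i ∂μ = 0)
    (h02 : ∀ i, ∫ ω, z₂ ω i ∂μ = 0)
    (h03 : ∀ i, ∫ ω, z₃ ω i ∂μ = 0)
    (hindep : iIndepFun (m := fam7MeasurableSpace d k) (quad7 h z₁ z₂ z₃) μ) :
    ∀ i j l : Fin d,
      ∫ ω, (a (h ω) i + z₁ ω i) * (b (h ω) j + z₂ ω j) * (c (h ω) l + z₃ ω l) ∂μ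
        = ∑ m, w m * a m i * b m j * c m l := by
  intro i j l
  classical
  have hfm : ∀ o, Measurable (quad7 h z₁ z₂ z₃ o) := by
    rintro (_ | jj)
    · exact hmh
    · fin_cases jj
      · exact hm1
      · exact hm2
      · exact hm3
  have hka : ∀ F : Fin k → ℝ, Measurable F := fun F => measurable_of_finite F
  -- grouped independence facts
  have I1 : IndepFun h z₁ μ := by
    have := hindep.indepFun (i := none) (j := some 0) (by simp)
    exact this
  have I2 : IndepFun (fun ω => (h ω, z₁ ω)) z₂ μ := by
    have J := hindep.indepFun_finset ({none, some 0} : Finset (Option (Fin 3))) {some 1}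
      (by decide) hfm
    have hgS : Measurable (fun v : (∀ x : ({none, some 0} : Finset (Option (Fin 3))), fam7 d k x) =>
        ((v ⟨none, by decide⟩, v ⟨some 0, by decide⟩) : Fin k × (Fin d → ℝ))) :=
      (measurable_pi_apply _).prodMk (measurable_pi_apply _)
    have hgT : Measurable (fun v : (∀ x : ({some 1} : Finset (Option (Fin 3))), fam7 d k x) =>
        (v ⟨some 1, by decide⟩ : Fin d → ℝ)) := measurable_pi_apply _
    exact J.comp hgS hgT
  have I3 : IndepFun (fun ω => (h ω, z₁ ω, z₂ ω)) z₃ μ := by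
    have J := hindep.indepFun_finset ({none, some 0, some 1} : Finset (Option (Fin 3))) {some 2}
      (by decide) hfm
    have hgS : Measurable
        (fun v : (∀ x : ({none, some 0, some 1} : Finset (Option (Fin 3))), fam7 d k x) =>
        ((v ⟨none, by decide⟩, v ⟨some 0, by decide⟩, v ⟨some 1, by decide⟩) :
          Fin k × (Fin d → ℝ) × (Fin d → ℝ))) :=
      (measurable_pi_apply _).prodMk ((measurable_pi_apply _).prodMk (measurable_pi_apply _))
    have hgT : Measurable (fun v : (∀ x : ({some 2} : Finset (Option (Fin 3))), fam7 d k x) =>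
        (v ⟨some 2, by decide⟩ : Fin d → ℝ)) := measurable_pi_apply _
    exact J.comp hgS hgT
  -- vanishing of terms containing a noise factor
  have key1 : ∀ (F : Fin k → ℝ) (i' : Fin d), ∫ ω, F (h ω) * z₁ ω i' ∂μ = 0 := by
    intro F i'
    have IF : IndepFun (fun ω => F (h ω)) (fun ω => z₁ ω i') μ :=
      I1.comp (hka F) (measurable_pi_apply i')
    rw [IF.integral_fun_mul_eq_mul_integral ((hka F).comp hmh).aestronglyMeasurable (hi1 i').1, h01 i', mul_zero]
  have key2 : ∀ (F : Fin k × (Fin d → ℝ) → ℝ), Measurable F → ∀ j' : Fin d,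
      ∫ ω, F (h ω, z₁ ω) * z₂ ω j' ∂μ = 0 := by
    intro F hF j'
    have IF : IndepFun (fun ω => F (h ω, z₁ ω)) (fun ω => z₂ ω j') μ :=
      I2.comp hF (measurable_pi_apply j')
    rw [IF.integral_fun_mul_eq_mul_integral ((hF.comp (hmh.prodMk hm1)).aestronglyMeasurable) (hi2 j').1,
      h02 j', mul_zero]
  have key3 : ∀ (F : Fin k × (Fin d → ℝ) × (Fin d → ℝ) → ℝ), Measurable F → ∀ l' : Fin d,
      ∫ ω, F (h ω, z₁ ω, z₂ ω) * z₃ ω l' ∂μ = 0 := by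
    intro F hF l'
    have IF : IndepFun (fun ω => F (h ω, z₁ ω, z₂ ω)) (fun ω => z₃ ω l') μ :=
      I3.comp hF (measurable_pi_apply l')
    rw [IF.integral_fun_mul_eq_mul_integral ((hF.comp (hmh.prodMk (hm1.prodMk hm2))).aestronglyMeasurable)
      (hi3 l').1, h03 l', mul_zero]
  -- integrability helpers
  haveI : IsFiniteMeasure (μ.map h) := Measure.isFiniteMeasure_map μ h
  have ihf : ∀ F : Fin k → ℝ, Integrable (fun ω => F (h ω)) μ := by
    intro F
    exact (integrable_map_measure (hka F).aestronglyMeasurable hmh.aemeasurable).1 .of_finite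
  have hbF : ∀ F : Fin k → ℝ, ∀ᵐ ω ∂μ, ‖F (h ω)‖ ≤ ∑ m, ‖F m‖ := fun F =>
    Filter.Eventually.of_forall fun ω => Finset.single_le_sum (fun _ _ => norm_nonneg _) (Finset.mem_univ _)
  have intZ12 : Integrable (fun ω => z₁ ω i * z₂ ω j) μ := by
    have IF : IndepFun (fun ω => z₁ ω i) (fun ω => z₂ ω j) μ :=
      I2.comp (φ := fun p : Fin k × (Fin d → ℝ) => p.2 i) (ψ := fun v : Fin d → ℝ => v j)
        ((measurable_pi_apply i).comp measurable_snd) (measurable_pi_apply j)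
    exact IF.integrable_mul (hi1 i) (hi2 j)
  have intW1 : Integrable (fun ω => a (h ω) i + z₁ ω i) μ := (ihf fun m => a m i).add (hi1 i)
  have intP2 : Integrable (fun ω => (a (h ω) i + z₁ ω i) * (b (h ω) j + z₂ ω j)) μ := by
    have e : (fun ω => (a (h ω) i + z₁ ω i) * (b (h ω) j + z₂ ω j))
        = fun ω => (fun m => a m i * b m j) (h ω) + ((fun m => a m i) (h ω) * z₂ ω j
            + ((fun m => b m j) (h ω) * z₁ ω i + z₁ ω i * z₂ ω j)) := by
      funext ω; ring
    rw [e]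
    exact (ihf (fun m => a m i * b m j)).add
      (((hi2 j).bdd_mul ((hka (fun m => a m i)).comp hmh).aestronglyMeasurable
          (hbF (fun m => a m i))).add
        (((hi1 i).bdd_mul ((hka (fun m => b m j)).comp hmh).aestronglyMeasurable
            (hbF (fun m => b m j))).add intZ12))
  have intP2C : Integrable
      (fun ω => (a (h ω) i + z₁ ω i) * (b (h ω) j + z₂ ω j) * c (h ω) l) μ := by
    have := intP2.bdd_mul ((hka (fun m => c m l)).comp hmh).aestronglyMeasurable
      (hbF (fun m => c m l))
    exact this.congr (Filter.Eventually.of_forall fun ω => by simp only [Function.comp_apply]; ring)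
  have hF3m : Measurable (fun p : Fin k × (Fin d → ℝ) × (Fin d → ℝ) =>
      (a p.1 i + p.2.1 i) * (b p.1 j + p.2.2 j)) :=
    (((hka (fun m => a m i)).comp measurable_fst).add
      ((measurable_pi_apply i).comp measurable_snd.fst)).mul
      (((hka (fun m => b m j)).comp measurable_fst).add
        ((measurable_pi_apply j).comp measurable_snd.snd))
  have intP2Z3 : Integrable
      (fun ω => (a (h ω) i + z₁ ω i) * (b (h ω) j + z₂ ω j) * z₃ ω l) μ := by
    have IF : IndepFun (fun ω => (a (h ω) i + z₁ ω i) * (b (h ω) j + z₂ ω j))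
        (fun ω => z₃ ω l) μ := I3.comp hF3m (measurable_pi_apply l)
    exact IF.integrable_mul intP2 (hi3 l)
  have split1 : ∫ ω, (a (h ω) i + z₁ ω i) * (b (h ω) j + z₂ ω j) * (c (h ω) l + z₃ ω l) ∂μ
      = ∫ ω, (a (h ω) i + z₁ ω i) * (b (h ω) j + z₂ ω j) * c (h ω) l ∂μ
        + ∫ ω, (a (h ω) i + z₁ ω i) * (b (h ω) j + z₂ ω j) * z₃ ω l ∂μ := by
    rw [← integral_add intP2C intP2Z3]
    exact integral_congr_ae (Filter.Eventually.of_forall fun ω => by ring)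
  have zero3 : ∫ ω, (a (h ω) i + z₁ ω i) * (b (h ω) j + z₂ ω j) * z₃ ω l ∂μ = 0 :=
    key3 (fun p => (a p.1 i + p.2.1 i) * (b p.1 j + p.2.2 j)) hF3m l
  -- second split
  have intP1C : Integrable (fun ω => (a (h ω) i + z₁ ω i) * c (h ω) l) μ := by
    have := intW1.bdd_mul ((hka (fun m => c m l)).comp hmh).aestronglyMeasurable
      (hbF (fun m => c m l))
    exact this.congr (Filter.Eventually.of_forall fun ω => by simp only [Function.comp_apply]; ring)
  have intf2a : Integrable (fun ω => (a (h ω) i + z₁ ω i) * b (h ω) j * c (h ω) l) μ := by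
    have := intW1.bdd_mul ((hka (fun m => b m j * c m l)).comp hmh).aestronglyMeasurable
      (hbF (fun m => b m j * c m l))
    exact this.congr (Filter.Eventually.of_forall fun ω => by simp only [Function.comp_apply]; ring)
  have hF2m : Measurable (fun p : Fin k × (Fin d → ℝ) => (a p.1 i + p.2 i) * c p.1 l) :=
    (((hka (fun m => a m i)).comp measurable_fst).add
      ((measurable_pi_apply i).comp measurable_snd)).mul
      ((hka (fun m => c m l)).comp measurable_fst)
  have intf2b : Integrable (fun ω => (a (h ω) i + z₁ ω i) * c (h ω) l * z₂ ω j) μ := by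
    have IF : IndepFun (fun ω => (a (h ω) i + z₁ ω i) * c (h ω) l) (fun ω => z₂ ω j) μ :=
      I2.comp hF2m (measurable_pi_apply j)
    exact IF.integrable_mul intP1C (hi2 j)
  have split2 : ∫ ω, (a (h ω) i + z₁ ω i) * (b (h ω) j + z₂ ω j) * c (h ω) l ∂μ
      = ∫ ω, (a (h ω) i + z₁ ω i) * b (h ω) j * c (h ω) l ∂μ
        + ∫ ω, (a (h ω) i + z₁ ω i) * c (h ω) l * z₂ ω j ∂μ := by
    rw [← integral_add intf2a intf2b]
    exact integral_congr_ae (Filter.Eventually.of_forall fun ω => by ring)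
  have zero2 : ∫ ω, (a (h ω) i + z₁ ω i) * c (h ω) l * z₂ ω j ∂μ = 0 :=
    key2 (fun p => (a p.1 i + p.2 i) * c p.1 l) hF2m j
  -- third split
  have intf3a : Integrable (fun ω => a (h ω) i * b (h ω) j * c (h ω) l) μ :=
    ihf (fun m => a m i * b m j * c m l)
  have intf3b : Integrable (fun ω => b (h ω) j * c (h ω) l * z₁ ω i) μ :=
    (hi1 i).bdd_mul ((hka (fun m => b m j * c m l)).comp hmh).aestronglyMeasurable
      (hbF (fun m => b m j * c m l))
  have split3 : ∫ ω, (a (h ω) i + z₁ ω i) * b (h ω) j * c (h ω) l ∂μ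
      = ∫ ω, a (h ω) i * b (h ω) j * c (h ω) l ∂μ
        + ∫ ω, b (h ω) j * c (h ω) l * z₁ ω i ∂μ := by
    rw [← integral_add intf3a intf3b]
    exact integral_congr_ae (Filter.Eventually.of_forall fun ω => by ring)
  have zero1 : ∫ ω, b (h ω) j * c (h ω) l * z₁ ω i ∂μ = 0 :=
    key1 (fun m => b m j * c m l) i
  have final : ∫ ω, a (h ω) i * b (h ω) j * c (h ω) l ∂μ
      = ∑ m, w m * a m i * b m j * c m l := by
    have hmap : ∫ ω, a (h ω) i * b (h ω) j * c (h ω) l ∂μ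
        = ∫ m, a m i * b m j * c m l ∂(μ.map h) :=
      (integral_map (φ := h) (f := fun m => a m i * b m j * c m l) hmh.aemeasurable
        (hka _).aestronglyMeasurable).symm
    rw [hmap, integral_fintype .of_finite]
    refine Finset.sum_congr rfl fun m _ => ?_
    rw [measureReal_def, Measure.map_apply hmh (measurableSet_singleton m)]
    have hpre : h ⁻¹' {m} = {ω | h ω = m} := rfl
    rw [hpre, hw m, smul_eq_mul]
    ring
  rw [split1, zero3, add_zero, split2, zero2, add_zero, split3, zero1, add_zero, final]
end

section
/- Let x = Σ_{j∈[k]} 1{h=j}(a_j + z) where h is a categorical random variable with P[h=j]=w_j, a_j ∈ ℝ^d, and z ∼ N(0, ζ² I_d) is independent of h (i.e., a mixture of spherical Gaussians with common covariance ζ² I). Then E[x ⊗ x ⊗ x] − ζ² Σ_{i∈[d]} ( E[x] ⊗ e_i ⊗ e_i + e_i ⊗ E[x] ⊗ e_i + e_i ⊗ e_i ⊗ E[x] ) = Σ_{j∈[k]} w_j · a_j ⊗ a_j ⊗ a_j. -/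
open MeasureTheory ProbabilityTheory

section AuxGauss

open Real Filter
open scoped NNReal ENNReal

lemma aux_integrable_pow_mul_exp {b : ℝ} (hb : 0 < b) (n : ℕ) :
    Integrable (fun x : ℝ => x ^ n * rexp (-b * x ^ 2)) := by
  have hlt : (-1 : ℝ) < (n : ℝ) := lt_of_lt_of_le neg_one_lt_zero (Nat.cast_nonneg n)
  have := integrable_rpow_mul_exp_neg_mul_sq hb hlt
  simpa [Real.rpow_natCast] using this

lemma aux_tendsto_atTop {b : ℝ} (hb : 0 < b) (n : ℕ) :
    Tendsto (fun x : ℝ => x ^ n * rexp (-b * x ^ 2)) atTop (nhds 0) := by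
  have h := rpow_mul_exp_neg_mul_sq_isLittleO_exp_neg hb (n : ℝ)
  have h2 : (fun x : ℝ => x ^ ((n : ℝ)) * rexp (-b * x ^ 2))
      = fun x : ℝ => x ^ n * rexp (-b * x ^ 2) :=
    funext fun x => by rw [Real.rpow_natCast]
  rw [h2] at h
  have hcomp : Filter.Tendsto (fun x : ℝ => (1/2 : ℝ) * x) atTop atTop :=
    Filter.Tendsto.const_mul_atTop (by norm_num) Filter.tendsto_id
  have hv0 : Tendsto (fun x : ℝ => rexp (-(1/2) * x)) atTop (nhds 0) := by
    have := Real.tendsto_exp_neg_atTop_nhds_zero.comp hcomp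
    refine this.congr fun x => ?_
    simp [Function.comp, neg_mul]
  exact h.tendsto_zero_of_tendsto hv0

lemma aux_tendsto_atBot {b : ℝ} (hb : 0 < b) (n : ℕ) :
    Tendsto (fun x : ℝ => x ^ n * rexp (-b * x ^ 2)) atBot (nhds 0) := by
  have h := (aux_tendsto_atTop hb n).comp tendsto_neg_atBot_atTop
  have h3 := h.const_mul ((-1 : ℝ) ^ n)
  rw [mul_zero] at h3
  refine h3.congr fun x => ?_
  simp only [Function.comp]
  rw [neg_sq, ← mul_assoc, ← mul_pow]
  norm_num

lemma gauss_odd1 {b : ℝ} (hb : 0 < b) : ∫ x : ℝ, x * rexp (-b * x ^ 2) = 0 := by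
  have hb' : b ≠ 0 := ne_of_gt hb
  have hderiv : ∀ x : ℝ, HasDerivAt (fun y : ℝ => -(2 * b)⁻¹ * rexp (-b * y ^ 2))
      (x * rexp (-b * x ^ 2)) x := by
    intro x
    have h1 : HasDerivAt (fun y : ℝ => -b * y ^ 2) (-b * (2 * x ^ 1)) x :=
      (hasDerivAt_pow 2 x).const_mul (-b)
    have h2 := h1.exp.const_mul (-(2 * b)⁻¹)
    refine h2.congr_deriv ?_
    field_simp
  have hint : Integrable (fun x : ℝ => x * rexp (-b * x ^ 2)) := by
    simpa using aux_integrable_pow_mul_exp hb 1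
  have htop : Tendsto (fun y : ℝ => -(2 * b)⁻¹ * rexp (-b * y ^ 2)) atTop (nhds 0) := by
    have := (aux_tendsto_atTop hb 0).const_mul (-(2 * b)⁻¹)
    simpa using this
  have hbot : Tendsto (fun y : ℝ => -(2 * b)⁻¹ * rexp (-b * y ^ 2)) atBot (nhds 0) := by
    have := (aux_tendsto_atBot hb 0).const_mul (-(2 * b)⁻¹)
    simpa using this
  have := integral_of_hasDerivAt_of_tendsto hderiv hint hbot htop
  simpa using this

lemma gauss_even2 {b : ℝ} (hb : 0 < b) :
    ∫ x : ℝ, x ^ 2 * rexp (-b * x ^ 2) = (2 * b)⁻¹ * ∫ x : ℝ, rexp (-b * x ^ 2) := by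
  have hb' : b ≠ 0 := ne_of_gt hb
  have hderiv : ∀ x : ℝ, HasDerivAt (fun y : ℝ => -(2 * b)⁻¹ * (y * rexp (-b * y ^ 2)))
      (x ^ 2 * rexp (-b * x ^ 2) - (2 * b)⁻¹ * rexp (-b * x ^ 2)) x := by
    intro x
    have h1 : HasDerivAt (fun y : ℝ => -b * y ^ 2) (-b * (2 * x ^ 1)) x :=
      (hasDerivAt_pow 2 x).const_mul (-b)
    have h2 := ((hasDerivAt_id x).mul h1.exp).const_mul (-(2 * b)⁻¹)
    refine h2.congr_deriv ?_
    simp only [id_eq]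
    field_simp
    ring
  have hi0 : Integrable (fun x : ℝ => rexp (-b * x ^ 2)) := by
    simpa using aux_integrable_pow_mul_exp hb 0
  have hi2 : Integrable (fun x : ℝ => x ^ 2 * rexp (-b * x ^ 2)) :=
    aux_integrable_pow_mul_exp hb 2
  have hint : Integrable
      (fun x : ℝ => x ^ 2 * rexp (-b * x ^ 2) - (2 * b)⁻¹ * rexp (-b * x ^ 2)) :=
    hi2.sub (hi0.const_mul _)
  have htop : Tendsto (fun y : ℝ => -(2 * b)⁻¹ * (y * rexp (-b * y ^ 2))) atTop (nhds 0) := by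
    have := (aux_tendsto_atTop hb 1).const_mul (-(2 * b)⁻¹)
    simpa using this
  have hbot : Tendsto (fun y : ℝ => -(2 * b)⁻¹ * (y * rexp (-b * y ^ 2))) atBot (nhds 0) := by
    have := (aux_tendsto_atBot hb 1).const_mul (-(2 * b)⁻¹)
    simpa using this
  have h := integral_of_hasDerivAt_of_tendsto hderiv hint hbot htop
  rw [sub_zero] at h
  rw [integral_sub hi2 (hi0.const_mul _), integral_const_mul] at h
  linarith

lemma gauss_odd3 {b : ℝ} (hb : 0 < b) : ∫ x : ℝ, x ^ 3 * rexp (-b * x ^ 2) = 0 := by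
  have hb' : b ≠ 0 := ne_of_gt hb
  have hderiv : ∀ x : ℝ,
      HasDerivAt (fun y : ℝ => -(2 * b)⁻¹ * ((y ^ 2 + b⁻¹) * rexp (-b * y ^ 2)))
      (x ^ 3 * rexp (-b * x ^ 2)) x := by
    intro x
    have h1 : HasDerivAt (fun y : ℝ => -b * y ^ 2) (-b * (2 * x ^ 1)) x :=
      (hasDerivAt_pow 2 x).const_mul (-b)
    have hp : HasDerivAt (fun y : ℝ => y ^ 2 + b⁻¹) (2 * x ^ 1) x :=
      (hasDerivAt_pow 2 x).add_const _
    have h2 := (hp.mul h1.exp).const_mul (-(2 * b)⁻¹)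
    refine h2.congr_deriv ?_
    field_simp
    ring
  have hint : Integrable (fun x : ℝ => x ^ 3 * rexp (-b * x ^ 2)) :=
    aux_integrable_pow_mul_exp hb 3
  have heq : (fun y : ℝ => -(2 * b)⁻¹ * ((y ^ 2 + b⁻¹) * rexp (-b * y ^ 2)))
      = fun y : ℝ => -(2 * b)⁻¹ * (y ^ 2 * rexp (-b * y ^ 2))
        + (-(2 * b)⁻¹ * b⁻¹) * (y ^ 0 * rexp (-b * y ^ 2)) := funext fun y => by ring
  have htop : Tendsto (fun y : ℝ => -(2 * b)⁻¹ * ((y ^ 2 + b⁻¹) * rexp (-b * y ^ 2)))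
      atTop (nhds 0) := by
    rw [heq]
    have := ((aux_tendsto_atTop hb 2).const_mul (-(2 * b)⁻¹)).add
      ((aux_tendsto_atTop hb 0).const_mul (-(2 * b)⁻¹ * b⁻¹))
    simpa using this
  have hbot : Tendsto (fun y : ℝ => -(2 * b)⁻¹ * ((y ^ 2 + b⁻¹) * rexp (-b * y ^ 2)))
      atBot (nhds 0) := by
    rw [heq]
    have := ((aux_tendsto_atBot hb 2).const_mul (-(2 * b)⁻¹)).add
      ((aux_tendsto_atBot hb 0).const_mul (-(2 * b)⁻¹ * b⁻¹))
    simpa using this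
  have := integral_of_hasDerivAt_of_tendsto hderiv hint hbot htop
  simpa using this

lemma gaussianReal_integral_eq {v : ℝ≥0} (hv : v ≠ 0) (g : ℝ → ℝ) :
    ∫ x, g x ∂(gaussianReal 0 v) = ∫ x, gaussianPDFReal 0 v x * g x := by
  rw [gaussianReal_of_var_ne_zero 0 hv]
  have hpdf : gaussianPDF 0 v
      = fun x => ((Real.toNNReal (gaussianPDFReal 0 v x) : ℝ≥0) : ℝ≥0∞) := rfl
  rw [hpdf, integral_withDensity_eq_integral_smul
    ((measurable_gaussianPDFReal 0 v).real_toNNReal)]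
  refine integral_congr_ae (ae_of_all _ fun x => ?_)
  simp [NNReal.smul_def, Real.coe_toNNReal _ (gaussianPDFReal_nonneg 0 v x)]

lemma gaussianReal_integrable_iff {v : ℝ≥0} (hv : v ≠ 0) (g : ℝ → ℝ) :
    Integrable g (gaussianReal 0 v)
      ↔ Integrable (fun x => gaussianPDFReal 0 v x * g x) := by
  rw [gaussianReal_of_var_ne_zero 0 hv]
  have hpdf : gaussianPDF 0 v
      = fun x => ((Real.toNNReal (gaussianPDFReal 0 v x) : ℝ≥0) : ℝ≥0∞) := rfl
  rw [hpdf, integrable_withDensity_iff_integrable_smul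
    ((measurable_gaussianPDFReal 0 v).real_toNNReal)]
  constructor <;> intro hI <;> refine hI.congr (ae_of_all _ fun x => ?_) <;>
    simp [NNReal.smul_def, Real.coe_toNNReal _ (gaussianPDFReal_nonneg 0 v x)]

lemma gaussianPDFReal_eq {v : ℝ≥0} (hv : v ≠ 0) (x : ℝ) :
    gaussianPDFReal 0 v x
      = (Real.sqrt (2 * π * v))⁻¹ * rexp (-(2 * (v : ℝ))⁻¹ * x ^ 2) := by
  have hv' : (v : ℝ) ≠ 0 := by exact_mod_cast hv
  rw [gaussianPDFReal]
  congr 1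
  rw [sub_zero]
  field_simp

lemma gauss_moments (ζ : NNReal) :
    (∫ x : ℝ, x ∂(gaussianReal 0 (ζ ^ 2))) = 0 ∧
    (∫ x : ℝ, x ^ 2 ∂(gaussianReal 0 (ζ ^ 2))) = (ζ : ℝ) ^ 2 ∧
    (∫ x : ℝ, x ^ 3 ∂(gaussianReal 0 (ζ ^ 2))) = 0 ∧
    ∀ n : ℕ, Integrable (fun x : ℝ => x ^ n) (gaussianReal 0 (ζ ^ 2)) := by
  by_cases hζ : ζ = 0
  · subst hζ
    have h0 : ((0 : NNReal) ^ 2 : NNReal) = 0 := by norm_num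
    rw [h0, gaussianReal_zero_var]
    refine ⟨by simp, by simp, by simp, fun n => ?_⟩
    exact (integrable_const (((0:ℝ)) ^ n)).congr (ae_eq_dirac (fun x : ℝ => x ^ n)).symm
  · have hv : (ζ ^ 2 : NNReal) ≠ 0 := pow_ne_zero _ hζ
    have hv' : (0 : ℝ) < ((ζ ^ 2 : NNReal) : ℝ) := by positivity
    set b : ℝ := (2 * ((ζ ^ 2 : NNReal) : ℝ))⁻¹ with hbdef
    have hb : 0 < b := by positivity
    set K : ℝ := (Real.sqrt (2 * π * ((ζ ^ 2 : NNReal) : ℝ)))⁻¹ with hKdef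
    have hpdf : ∀ x : ℝ, gaussianPDFReal 0 (ζ ^ 2) x = K * rexp (-b * x ^ 2) :=
      fun x => gaussianPDFReal_eq hv x
    have hone : K * ∫ x : ℝ, rexp (-b * x ^ 2) = 1 := by
      have h1 := integral_gaussianPDFReal_eq_one 0 hv
      rw [show (fun x => gaussianPDFReal 0 (ζ ^ 2) x)
          = fun x => K * rexp (-b * x ^ 2) from funext hpdf] at h1
      rwa [integral_const_mul] at h1
    have hmomint : ∀ n : ℕ, Integrable (fun x : ℝ => x ^ n) (gaussianReal 0 (ζ ^ 2)) := by
      intro n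
      rw [gaussianReal_integrable_iff hv]
      have : (fun x => gaussianPDFReal 0 (ζ ^ 2) x * x ^ n)
          = fun x => K * (x ^ n * rexp (-b * x ^ 2)) := by
        funext x; rw [hpdf]; ring
      rw [this]
      exact (aux_integrable_pow_mul_exp hb n).const_mul K
    have hval : ∀ n : ℕ, ∫ x : ℝ, x ^ n ∂(gaussianReal 0 (ζ ^ 2))
        = K * ∫ x : ℝ, x ^ n * rexp (-b * x ^ 2) := by
      intro n
      rw [gaussianReal_integral_eq hv]
      have : (fun x => gaussianPDFReal 0 (ζ ^ 2) x * x ^ n)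
          = fun x => K * (x ^ n * rexp (-b * x ^ 2)) := by
        funext x; rw [hpdf]; ring
      rw [this, integral_const_mul]
    refine ⟨?_, ?_, ?_, hmomint⟩
    · have := hval 1
      simp only [pow_one] at this
      rw [this, gauss_odd1 hb, mul_zero]
    · rw [hval 2, gauss_even2 hb, ← mul_assoc, mul_comm K (2 * b)⁻¹, mul_assoc, hone,
        mul_one]
      have hz0 : (ζ : ℝ) ≠ 0 := by exact_mod_cast hζ
      have hcast : ((ζ ^ 2 : NNReal) : ℝ) = (ζ : ℝ) ^ 2 := by push_cast; ring
      rw [hbdef, hcast]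
      field_simp
    · rw [hval 3, gauss_odd3 hb, mul_zero]

end AuxGauss

section AuxPi

lemma pi_integrable {d : ℕ} (G : Measure ℝ) [IsProbabilityMeasure G]
    {f : Fin d → ℝ → ℝ} (hf : ∀ i, Integrable (f i) G) :
    Integrable (fun x : Fin d → ℝ => ∏ i, f i (x i)) (Measure.pi fun _ => G) := by
  letI : MeasureSpace ℝ := ⟨G⟩
  haveI : SigmaFinite (volume : Measure ℝ) := (by infer_instance : SigmaFinite G)
  have h := MeasureTheory.Integrable.fintype_prod (𝕜 := ℝ) (f := f) hf
  have h2 : (volume : Measure (Fin d → ℝ)) = Measure.pi fun _ => G := volume_pi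
  exact h

lemma pi_integral {d : ℕ} (G : Measure ℝ) [IsProbabilityMeasure G]
    (f : Fin d → ℝ → ℝ) :
    ∫ x : Fin d → ℝ, ∏ i, f i (x i) ∂(Measure.pi fun _ => G) = ∏ i, ∫ t, f i t ∂G := by
  letI : MeasureSpace ℝ := ⟨G⟩
  haveI : SigmaFinite (volume : Measure ℝ) := (by infer_instance : SigmaFinite G)
  have h := MeasureTheory.integral_fintype_prod_eq_prod (E := fun _ : Fin d => ℝ) f (μ := fun _ => G)
  have h2 : (volume : Measure (Fin d → ℝ)) = Measure.pi fun _ => G := volume_pi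
  exact h

end AuxPi

theorem stmt_8 {Ω : Type*} [MeasurableSpace Ω] (μ : Measure Ω) [IsProbabilityMeasure μ]
    (d k : ℕ) (a : Fin k → Fin d → ℝ) (w : Fin k → ℝ) (ζ : NNReal)
    (h : Ω → Fin k) (z : Ω → Fin d → ℝ)
    (hmh : Measurable h) (hmz : Measurable z)
    (hw : ∀ j, (μ {ω | h ω = j}).toReal = w j)
    (hzlaw : Measure.map z μ = Measure.pi fun _ : Fin d => gaussianReal 0 (ζ ^ 2))
    (hindep : IndepFun h z μ) :
    ∀ p q r : Fin d,
      (∫ ω, (a (h ω) p + z ω p) * (a (h ω) q + z ω q) * (a (h ω) r + z ω r) ∂μ)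
        - (ζ : ℝ) ^ 2 *
          ((if q = r then ∫ ω, (a (h ω) p + z ω p) ∂μ else 0)
            + (if p = r then ∫ ω, (a (h ω) q + z ω q) ∂μ else 0)
            + (if p = q then ∫ ω, (a (h ω) r + z ω r) ∂μ else 0))
      = ∑ j, w j * a j p * a j q * a j r := by
  intro p q r
  set G : Measure ℝ := gaussianReal 0 (ζ ^ 2) with hG
  set ν : Measure (Fin d → ℝ) := Measure.pi (fun _ : Fin d => G) with hν
  haveI : IsProbabilityMeasure G := by rw [hG]; infer_instance
  haveI : IsProbabilityMeasure ν := by rw [hν]; infer_instance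
  obtain ⟨hm1, hm2, hm3, hmint⟩ := gauss_moments ζ
  rw [← hG] at hm1 hm2 hm3
  simp only [← hG] at hmint
  -- integrals of functions of h
  have hfh : ∀ f : Fin k → ℝ, Measurable fun ω => f (h ω) :=
    fun f => Measurable.of_discrete.comp hmh
  have hSumInt : ∀ f : Fin k → ℝ, Integrable (fun ω => f (h ω)) μ := by
    intro f
    refine Integrable.mono' (integrable_const (∑ j, |f j|))
      ((hfh f).aestronglyMeasurable) (ae_of_all _ fun ω => ?_)
    calc ‖f (h ω)‖ = |f (h ω)| := rfl
      _ ≤ ∑ j, |f j| := Finset.single_le_sum (fun j _ => abs_nonneg (f j))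
          (Finset.mem_univ (h ω))
  have hSum : ∀ f : Fin k → ℝ, ∫ ω, f (h ω) ∂μ = ∑ j, w j * f j := by
    intro f
    have hmeas : AEStronglyMeasurable f (Measure.map h μ) :=
      Measurable.of_discrete.aestronglyMeasurable
    rw [← integral_map hmh.aemeasurable hmeas]
    haveI : IsProbabilityMeasure (Measure.map h μ) :=
      Measure.isProbabilityMeasure_map hmh.aemeasurable
    rw [integral_fintype Integrable.of_finite]
    refine Finset.sum_congr rfl fun j _ => ?_
    rw [Measure.real, Measure.map_apply hmh (measurableSet_singleton j)]
    have hpre : h ⁻¹' {j} = {ω | h ω = j} := by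
      ext ω; simp [Set.mem_preimage]
    rw [hpre, hw j, smul_eq_mul]
  -- integrals of functions of z
  have hgzInt : ∀ g : (Fin d → ℝ) → ℝ, Measurable g → Integrable g ν →
      Integrable (fun ω => g (z ω)) μ := by
    intro g hg hgi
    rw [← hzlaw] at hgi
    exact (integrable_map_measure hg.aestronglyMeasurable hmz.aemeasurable).mp hgi
  have hgzVal : ∀ g : (Fin d → ℝ) → ℝ, Measurable g →
      ∫ ω, g (z ω) ∂μ = ∫ x, g x ∂ν := by
    intro g hg
    rw [← hzlaw]
    exact (integral_map hmz.aemeasurable hg.aestronglyMeasurable).symm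
  -- mixed terms
  have hmixInt : ∀ (f : Fin k → ℝ) (g : (Fin d → ℝ) → ℝ), Measurable g → Integrable g ν →
      Integrable (fun ω => f (h ω) * g (z ω)) μ := by
    intro f g hg hgi
    exact (hindep.comp Measurable.of_discrete hg).integrable_mul (hSumInt f) (hgzInt g hg hgi)
  have hmixVal : ∀ (f : Fin k → ℝ) (g : (Fin d → ℝ) → ℝ), Measurable g → Integrable g ν →
      ∫ ω, f (h ω) * g (z ω) ∂μ = (∑ j, w j * f j) * ∫ x, g x ∂ν := by
    intro f g hg hgi
    have key := (hindep.comp (φ := f) (ψ := g) Measurable.of_discrete hg).integral_mul_eq_mul_integral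
      (hSumInt f).aestronglyMeasurable (hgzInt g hg hgi).aestronglyMeasurable
    calc ∫ ω, f (h ω) * g (z ω) ∂μ
        = ∫ ω, ((f ∘ h) * (g ∘ z)) ω ∂μ := rfl
      _ = (∫ ω, (f ∘ h) ω ∂μ) * ∫ ω, (g ∘ z) ω ∂μ := key
      _ = (∑ j, w j * f j) * ∫ x, g x ∂ν := by
          rw [show (∫ ω, (f ∘ h) ω ∂μ) = ∑ j, w j * f j from hSum f,
            show (∫ ω, (g ∘ z) ω ∂μ) = ∫ x, g x ∂ν from hgzVal g hg]
  -- monomials over ν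
  have hmono : ∀ m : Fin d → ℕ,
      Integrable (fun x : Fin d → ℝ => ∏ i, x i ^ m i) ν ∧
      ∫ x, (∏ i, x i ^ m i) ∂ν = ∏ i, ∫ t : ℝ, t ^ m i ∂G := by
    intro m
    constructor
    · rw [hν]
      exact pi_integrable G (fun i => hmint (m i))
    · rw [hν]
      exact pi_integral G (fun i => fun t => t ^ m i)
  have hprod1 : ∀ (s : Fin d) (x : Fin d → ℝ),
      ∏ i, x i ^ (if i = s then 1 else 0) = x s := by
    intro s x
    rw [Finset.prod_congr rfl (fun i _ => pow_ite (i = s) (x i) 1 0)]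
    simp [Finset.prod_ite_eq']
  -- the three kinds of z-monomials used
  have hg1meas : ∀ s : Fin d, Measurable fun x : Fin d → ℝ => x s :=
    fun s => measurable_pi_apply s
  have hg1 : ∀ s : Fin d, Integrable (fun x : Fin d → ℝ => x s) ν ∧
      ∫ x, (fun x : Fin d → ℝ => x s) x ∂ν = 0 := by
    intro s
    have hm := hmono (fun i => if i = s then 1 else 0)
    have heq : (fun x : Fin d → ℝ => ∏ i, x i ^ (if i = s then 1 else 0))
        = fun x : Fin d → ℝ => x s := funext fun x => hprod1 s x
    rw [heq] at hm
    refine ⟨hm.1, ?_⟩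
    rw [hm.2]
    refine Finset.prod_eq_zero (Finset.mem_univ s) ?_
    simp [hm1]
  have hg2 : ∀ s t : Fin d, Integrable (fun x : Fin d → ℝ => x s * x t) ν ∧
      ∫ x, (fun x : Fin d → ℝ => x s * x t) x ∂ν
        = if s = t then (ζ : ℝ) ^ 2 else 0 := by
    intro s t
    have hm := hmono (fun i => (if i = s then 1 else 0) + (if i = t then 1 else 0))
    have heq : (fun x : Fin d → ℝ =>
          ∏ i, x i ^ ((if i = s then 1 else 0) + (if i = t then 1 else 0)))
        = fun x : Fin d → ℝ => x s * x t := by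
      funext x
      simp_rw [pow_add]
      rw [Finset.prod_mul_distrib, hprod1 s x, hprod1 t x]
    rw [heq] at hm
    refine ⟨hm.1, ?_⟩
    rw [hm.2]
    by_cases hst : s = t
    · subst hst
      rw [if_pos rfl]
      rw [Finset.prod_eq_single s]
      · simp [hm2]
      · intro j _ hj
        simp [hj, measure_univ]
      · intro hs; exact absurd (Finset.mem_univ s) hs
    · rw [if_neg hst]
      refine Finset.prod_eq_zero (Finset.mem_univ s) ?_
      rw [if_pos rfl, if_neg hst]
      simpa using hm1
  have hg3 : Integrable (fun x : Fin d → ℝ => x p * x q * x r) ν ∧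
      ∫ x, (fun x : Fin d → ℝ => x p * x q * x r) x ∂ν = 0 := by
    have hm := hmono (fun i =>
      (if i = p then 1 else 0) + (if i = q then 1 else 0) + (if i = r then 1 else 0))
    have heq : (fun x : Fin d → ℝ => ∏ i, x i ^
          ((if i = p then 1 else 0) + (if i = q then 1 else 0) + (if i = r then 1 else 0)))
        = fun x : Fin d → ℝ => x p * x q * x r := by
      funext x
      simp_rw [pow_add]
      rw [Finset.prod_mul_distrib, Finset.prod_mul_distrib,
        hprod1 p x, hprod1 q x, hprod1 r x]
    rw [heq] at hm
    refine ⟨hm.1, ?_⟩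
    rw [hm.2]
    have hodd : ∫ t : ℝ, t ^ 1 ∂G = 0 := by simpa using hm1
    rcases eq_or_ne p q with h1 | h1
    · rcases eq_or_ne q r with h2 | h2
      · refine Finset.prod_eq_zero (Finset.mem_univ p) ?_
        have hpr : p = r := h1.trans h2
        rw [if_pos rfl, if_pos h1, if_pos hpr]
        simpa using hm3
      · refine Finset.prod_eq_zero (Finset.mem_univ r) ?_
        have hrp : r ≠ p := fun hc => h2 (h1.symm.trans hc.symm)
        have hrq : r ≠ q := fun hc => h2 hc.symm
        rw [if_neg hrp, if_neg hrq, if_pos rfl]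
        simpa using hm1
    · rcases eq_or_ne q r with h2 | h2
      · refine Finset.prod_eq_zero (Finset.mem_univ p) ?_
        have hpr : p ≠ r := fun hc => h1 (hc.trans h2.symm)
        rw [if_pos rfl, if_neg h1, if_neg hpr]
        simpa using hm1
      · refine Finset.prod_eq_zero (Finset.mem_univ q) ?_
        have hqp : q ≠ p := fun hc => h1 hc.symm
        rw [if_neg hqp, if_pos rfl, if_neg h2]
        simpa using hm1
  have hgc : Integrable (fun _ : Fin d → ℝ => (1 : ℝ)) ν ∧
      ∫ x, (fun _ : Fin d → ℝ => (1 : ℝ)) x ∂ν = 1 := by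
    refine ⟨integrable_const 1, ?_⟩
    simp
  -- first moments
  have hfirst : ∀ s : Fin d, ∫ ω, (a (h ω) s + z ω s) ∂μ = ∑ j, w j * a j s := by
    intro s
    rw [integral_add (hSumInt (fun j => a j s)) (hgzInt _ (hg1meas s) (hg1 s).1),
      hSum (fun j => a j s), hgzVal _ (hg1meas s), (hg1 s).2, add_zero]
  -- expansion into eight raw terms
  have hexp : (fun ω => (a (h ω) p + z ω p) * (a (h ω) q + z ω q) * (a (h ω) r + z ω r))
      = fun ω =>
        a (h ω) p * a (h ω) q * a (h ω) r
        + (a (h ω) p * a (h ω) q * z ω r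
        + (a (h ω) p * a (h ω) r * z ω q
        + (a (h ω) q * a (h ω) r * z ω p
        + (a (h ω) p * (z ω q * z ω r)
        + (a (h ω) q * (z ω p * z ω r)
        + (a (h ω) r * (z ω p * z ω q)
        + z ω p * z ω q * z ω r)))))) := by
    funext ω
    ring
  have hg2meas : ∀ s t : Fin d, Measurable fun x : Fin d → ℝ => x s * x t :=
    fun s t => (measurable_pi_apply s).mul (measurable_pi_apply t)
  have hg3meas : Measurable fun x : Fin d → ℝ => x p * x q * x r :=
    (hg2meas p q).mul (measurable_pi_apply r)
  have i1 : Integrable (fun ω => a (h ω) p * a (h ω) q * a (h ω) r) μ :=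
    hSumInt (fun j => a j p * a j q * a j r)
  have i2 : Integrable (fun ω => a (h ω) p * a (h ω) q * z ω r) μ :=
    hmixInt (fun j => a j p * a j q) _ (hg1meas r) (hg1 r).1
  have i3 : Integrable (fun ω => a (h ω) p * a (h ω) r * z ω q) μ :=
    hmixInt (fun j => a j p * a j r) _ (hg1meas q) (hg1 q).1
  have i4 : Integrable (fun ω => a (h ω) q * a (h ω) r * z ω p) μ :=
    hmixInt (fun j => a j q * a j r) _ (hg1meas p) (hg1 p).1
  have i5 : Integrable (fun ω => a (h ω) p * (z ω q * z ω r)) μ :=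
    hmixInt (fun j => a j p) _ (hg2meas q r) (hg2 q r).1
  have i6 : Integrable (fun ω => a (h ω) q * (z ω p * z ω r)) μ :=
    hmixInt (fun j => a j q) _ (hg2meas p r) (hg2 p r).1
  have i7 : Integrable (fun ω => a (h ω) r * (z ω p * z ω q)) μ :=
    hmixInt (fun j => a j r) _ (hg2meas p q) (hg2 p q).1
  have i8 : Integrable (fun ω => z ω p * z ω q * z ω r) μ :=
    hgzInt _ hg3meas hg3.1
  -- values of the eight integrals
  have v1 : ∫ ω, a (h ω) p * a (h ω) q * a (h ω) r ∂μ
      = ∑ j, w j * (a j p * a j q * a j r) :=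
    hSum (fun j => a j p * a j q * a j r)
  have v2 : ∫ ω, a (h ω) p * a (h ω) q * z ω r ∂μ
      = (∑ j, w j * (a j p * a j q)) * 0 := by
    have hv := hmixVal (fun j => a j p * a j q) _ (hg1meas r) (hg1 r).1
    rw [(hg1 r).2] at hv
    exact hv
  have v3 : ∫ ω, a (h ω) p * a (h ω) r * z ω q ∂μ
      = (∑ j, w j * (a j p * a j r)) * 0 := by
    have hv := hmixVal (fun j => a j p * a j r) _ (hg1meas q) (hg1 q).1
    rw [(hg1 q).2] at hv
    exact hv
  have v4 : ∫ ω, a (h ω) q * a (h ω) r * z ω p ∂μ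
      = (∑ j, w j * (a j q * a j r)) * 0 := by
    have hv := hmixVal (fun j => a j q * a j r) _ (hg1meas p) (hg1 p).1
    rw [(hg1 p).2] at hv
    exact hv
  have v5 : ∫ ω, a (h ω) p * (z ω q * z ω r) ∂μ
      = (∑ j, w j * a j p) * (if q = r then (ζ : ℝ) ^ 2 else 0) := by
    have hv := hmixVal (fun j => a j p) _ (hg2meas q r) (hg2 q r).1
    rw [(hg2 q r).2] at hv
    exact hv
  have v6 : ∫ ω, a (h ω) q * (z ω p * z ω r) ∂μ
      = (∑ j, w j * a j q) * (if p = r then (ζ : ℝ) ^ 2 else 0) := by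
    have hv := hmixVal (fun j => a j q) _ (hg2meas p r) (hg2 p r).1
    rw [(hg2 p r).2] at hv
    exact hv
  have v7 : ∫ ω, a (h ω) r * (z ω p * z ω q) ∂μ
      = (∑ j, w j * a j r) * (if p = q then (ζ : ℝ) ^ 2 else 0) := by
    have hv := hmixVal (fun j => a j r) _ (hg2meas p q) (hg2 p q).1
    rw [(hg2 p q).2] at hv
    exact hv
  have v8 : ∫ ω, z ω p * z ω q * z ω r ∂μ = 0 := by
    have hv := hgzVal _ hg3meas
    rw [hg3.2] at hv
    exact hv
  -- split the integral
  have e7 : ∫ ω, (a (h ω) r * (z ω p * z ω q) + z ω p * z ω q * z ω r) ∂μ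
      = (∫ ω, a (h ω) r * (z ω p * z ω q) ∂μ) + ∫ ω, z ω p * z ω q * z ω r ∂μ :=
    integral_add i7 i8
  have e6 : ∫ ω, (a (h ω) q * (z ω p * z ω r)
        + (a (h ω) r * (z ω p * z ω q) + z ω p * z ω q * z ω r)) ∂μ
      = (∫ ω, a (h ω) q * (z ω p * z ω r) ∂μ)
        + ∫ ω, (a (h ω) r * (z ω p * z ω q) + z ω p * z ω q * z ω r) ∂μ :=
    integral_add i6 (i7.add i8)
  have e5 : ∫ ω, (a (h ω) p * (z ω q * z ω r)
        + (a (h ω) q * (z ω p * z ω r)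
        + (a (h ω) r * (z ω p * z ω q) + z ω p * z ω q * z ω r))) ∂μ
      = (∫ ω, a (h ω) p * (z ω q * z ω r) ∂μ)
        + ∫ ω, (a (h ω) q * (z ω p * z ω r)
          + (a (h ω) r * (z ω p * z ω q) + z ω p * z ω q * z ω r)) ∂μ :=
    integral_add i5 (i6.add (i7.add i8))
  have e4 : ∫ ω, (a (h ω) q * a (h ω) r * z ω p
        + (a (h ω) p * (z ω q * z ω r)
        + (a (h ω) q * (z ω p * z ω r)
        + (a (h ω) r * (z ω p * z ω q) + z ω p * z ω q * z ω r)))) ∂μ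
      = (∫ ω, a (h ω) q * a (h ω) r * z ω p ∂μ)
        + ∫ ω, (a (h ω) p * (z ω q * z ω r)
          + (a (h ω) q * (z ω p * z ω r)
          + (a (h ω) r * (z ω p * z ω q) + z ω p * z ω q * z ω r))) ∂μ :=
    integral_add i4 (i5.add (i6.add (i7.add i8)))
  have e3 : ∫ ω, (a (h ω) p * a (h ω) r * z ω q
        + (a (h ω) q * a (h ω) r * z ω p
        + (a (h ω) p * (z ω q * z ω r)
        + (a (h ω) q * (z ω p * z ω r)
        + (a (h ω) r * (z ω p * z ω q) + z ω p * z ω q * z ω r))))) ∂μ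
      = (∫ ω, a (h ω) p * a (h ω) r * z ω q ∂μ)
        + ∫ ω, (a (h ω) q * a (h ω) r * z ω p
          + (a (h ω) p * (z ω q * z ω r)
          + (a (h ω) q * (z ω p * z ω r)
          + (a (h ω) r * (z ω p * z ω q) + z ω p * z ω q * z ω r)))) ∂μ :=
    integral_add i3 (i4.add (i5.add (i6.add (i7.add i8))))
  have e2 : ∫ ω, (a (h ω) p * a (h ω) q * z ω r
        + (a (h ω) p * a (h ω) r * z ω q
        + (a (h ω) q * a (h ω) r * z ω p
        + (a (h ω) p * (z ω q * z ω r)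
        + (a (h ω) q * (z ω p * z ω r)
        + (a (h ω) r * (z ω p * z ω q) + z ω p * z ω q * z ω r)))))) ∂μ
      = (∫ ω, a (h ω) p * a (h ω) q * z ω r ∂μ)
        + ∫ ω, (a (h ω) p * a (h ω) r * z ω q
          + (a (h ω) q * a (h ω) r * z ω p
          + (a (h ω) p * (z ω q * z ω r)
          + (a (h ω) q * (z ω p * z ω r)
          + (a (h ω) r * (z ω p * z ω q) + z ω p * z ω q * z ω r))))) ∂μ :=
    integral_add i2 (i3.add (i4.add (i5.add (i6.add (i7.add i8)))))
  have e1 : ∫ ω, (a (h ω) p * a (h ω) q * a (h ω) r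
        + (a (h ω) p * a (h ω) q * z ω r
        + (a (h ω) p * a (h ω) r * z ω q
        + (a (h ω) q * a (h ω) r * z ω p
        + (a (h ω) p * (z ω q * z ω r)
        + (a (h ω) q * (z ω p * z ω r)
        + (a (h ω) r * (z ω p * z ω q) + z ω p * z ω q * z ω r))))))) ∂μ
      = (∫ ω, a (h ω) p * a (h ω) q * a (h ω) r ∂μ)
        + ∫ ω, (a (h ω) p * a (h ω) q * z ω r
          + (a (h ω) p * a (h ω) r * z ω q
          + (a (h ω) q * a (h ω) r * z ω p
          + (a (h ω) p * (z ω q * z ω r)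
          + (a (h ω) q * (z ω p * z ω r)
          + (a (h ω) r * (z ω p * z ω q) + z ω p * z ω q * z ω r)))))) ∂μ :=
    integral_add i1 (i2.add (i3.add (i4.add (i5.add (i6.add (i7.add i8))))))
  rw [hexp, e1, e2, e3, e4, e5, e6, e7, v1, v2, v3, v4, v5, v6, v7, v8]
  rw [hfirst p, hfirst q, hfirst r]
  have hsum3 : ∑ j, w j * (a j p * a j q * a j r) = ∑ j, w j * a j p * a j q * a j r :=
    Finset.sum_congr rfl fun j _ => by ring
  rw [hsum3]
  split_ifs <;> ring
end
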